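/- Let 1 ≤ ℓ ≤ m−1, let W be an (m−1)-dimensional subspace of V, and let Π be a hyperplane of the Plücker projective space P(⋀^ℓ V) such that not every ℓ-dimensional subspace of W lies on Π. Then |{L ∈ G(ℓ,W) : L lies on Π}| ≤ [m−1 ℓ]_q − q^{ℓ(m−1−ℓ)}. -/

import Mathlib

open Module

/-- The Gaussian binomial coefficient `[m ℓ]_q`, as a rational number. -/
noncomputable def gaussBinom (q m l : ℕ) : ℚ :=
  ∏ i ∈ Finset.range l, ((q : ℚ) ^ (m - i) - 1) / ((q : ℚ) ^ (i + 1) - 1)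

/-- `e(ℓ,m) = [m ℓ]_q − q^{ℓ(m−ℓ)}`. -/
noncomputable def eG (q l m : ℕ) : ℚ :=
  gaussBinom q m l - (q : ℚ) ^ (l * (m - l))

/-- `e'(ℓ,m) = [m ℓ]_q − q^{ℓ(m−ℓ)} − q^{ℓ(m−ℓ)−2}`. -/
noncomputable def eG' (q l m : ℕ) : ℚ :=
  gaussBinom q m l - (q : ℚ) ^ (l * (m - l)) - (q : ℚ) ^ (l * (m - l) - 2)

section Aux

variable {F : Type*} [Field F] {U : Type*} [AddCommGroup U] [Module F U]

private lemma sign_smul_eq_zero' {n : ℕ} (σ : Equiv.Perm (Fin n)) {a : F}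
    (h : Equiv.Perm.sign σ • a = 0) : a = 0 := by
  rcases Int.units_eq_one_or (Equiv.Perm.sign σ) with hs | hs <;> rw [hs] at h <;>
    simpa [Units.smul_def] using h

private lemma map_eq_zero_of_curry {l : ℕ} (g : U [⋀^Fin (l+1)]→ₗ[F] F) {x : U}
    (hx : g.curryLeft x = 0) (w : Fin (l + 1) → U) (j : Fin (l + 1)) (hw : w j = x) :
    g w = 0 := by
  have h1 : g (w ∘ Equiv.swap 0 j) = 0 := by
    have hx0 : (w ∘ Equiv.swap 0 j) 0 = x := by simp [hw]
    have h2 : g.curryLeft ((w ∘ Equiv.swap 0 j) 0) (Fin.tail (w ∘ Equiv.swap 0 j))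
        = g (w ∘ Equiv.swap 0 j) := by
      rw [AlternatingMap.curryLeft_apply_apply]
      exact congrArg g (Fin.cons_self_tail _)
    rw [← h2, hx0, hx]
    rfl
  have h2 := g.map_perm w (Equiv.swap 0 j)
  rw [h1] at h2
  exact sign_smul_eq_zero' _ h2.symm

private lemma ker_inf_span_eq_bot {l : ℕ} (g : U [⋀^Fin (l+1)]→ₗ[F] F)
    {v : Fin (l+1) → U} (hv : g v ≠ 0) :
    (LinearMap.ker g.curryLeft ⊓ Submodule.span F (Set.range v)) = ⊥ := by
  classical
  rw [Submodule.eq_bot_iff]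
  rintro x ⟨hxK, hxS⟩
  obtain ⟨c, rfl⟩ := (Submodule.mem_span_range_iff_exists_fun F).1 hxS
  have hcj : ∀ j, c j = 0 := by
    intro j
    have h1 : g (Function.update v j (∑ i, c i • v i)) = 0 :=
      map_eq_zero_of_curry g (LinearMap.mem_ker.1 hxK) _ j (Function.update_self j _ v)
    rw [AlternatingMap.map_update_sum] at h1
    have h2 : ∀ i, g (Function.update v j (c i • v i)) =
        if i = j then c j • g v else 0 := by
      intro i
      rw [AlternatingMap.map_update_smul]
      by_cases hij : i = j
      · subst hij; rw [if_pos rfl, Function.update_eq_self]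
      · rw [if_neg hij, g.map_update_self v (Ne.symm hij), smul_zero]
    rw [Finset.sum_congr rfl (fun i _ => h2 i), Finset.sum_ite_eq' Finset.univ j
      (fun _ => c j • g v)] at h1
    simp only [Finset.mem_univ, if_pos] at h1
    exact (smul_eq_zero.1 h1).resolve_right hv
  simp [hcj]

private lemma finrank_ker_curry_le [FiniteDimensional F U] {l : ℕ}
    (g : U [⋀^Fin (l+1)]→ₗ[F] F) (hg : g ≠ 0) :
    finrank F (LinearMap.ker g.curryLeft) + (l + 1) ≤ finrank F U := by
  obtain ⟨v, hv⟩ : ∃ v, g v ≠ 0 := by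
    by_contra h; push_neg at h; exact hg (AlternatingMap.ext h)
  have hind : LinearIndependent F v := by
    by_contra h; exact hv (g.map_linearDependent v h)
  have hspan : finrank F (Submodule.span F (Set.range v)) = l + 1 := by
    rw [finrank_span_eq_card hind, Fintype.card_fin]
  have h := Submodule.finrank_sup_add_finrank_inf_eq (LinearMap.ker g.curryLeft)
    (Submodule.span F (Set.range v))
  rw [ker_inf_span_eq_bot g hv, finrank_bot, add_zero] at h
  have h2 := Submodule.finrank_le (LinearMap.ker g.curryLeft ⊔ Submodule.span F (Set.range v))
  omega

private lemma zero_on_span {l : ℕ} (g : U [⋀^Fin l]→ₗ[F] F)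
    {v : Fin l → U} (hvi : LinearIndependent F v) (hv : g v = 0)
    (w : Fin l → U) (hw : ∀ i, w i ∈ Submodule.span F (Set.range v)) : g w = 0 := by
  classical
  set S := Submodule.span F (Set.range v) with hS
  let b : Basis (Fin l) F S := Basis.span hvi
  let gS : S [⋀^Fin l]→ₗ[F] F := g.compLinearMap S.subtype
  have hb : gS b = g v := by
    show g (S.subtype ∘ fun i => b i) = g v
    exact congrArg g (funext fun i => congrArg Subtype.val (Basis.span_apply hvi i))
  have hdet := AlternatingMap.eq_smul_basis_det b gS
  have : gS (fun i => (⟨w i, hw i⟩ : S)) = 0 := by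
    rw [hdet]
    simp [hb, hv]
  simpa [gS, AlternatingMap.compLinearMap_apply, Function.comp] using this

private lemma count_nonzero_tuples [Fintype F] [FiniteDimensional F U]
    (l : ℕ) (g : U [⋀^Fin l]→ₗ[F] F) (hg : g ≠ 0) (hl : l ≤ finrank F U) :
    ∏ i ∈ Finset.range l,
        (Fintype.card F ^ finrank F U - Fintype.card F ^ (finrank F U - (i+1)))
      ≤ Nat.card {v : Fin l → U // g v ≠ 0} := by
  classical
  haveI : Finite U := Module.finite_of_finite F
  induction l with
  | zero =>
    obtain ⟨v, hv⟩ : ∃ v, g v ≠ 0 := by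
      by_contra h; push_neg at h; exact hg (AlternatingMap.ext h)
    haveI : Nonempty {v : Fin 0 → U // g v ≠ 0} := ⟨⟨v, hv⟩⟩
    simp only [Finset.range_zero, Finset.prod_empty]
    exact Nat.card_pos
  | succ l ih =>
    set n := finrank F U with hn
    set K := LinearMap.ker g.curryLeft with hK
    letI : Fintype U := Fintype.ofFinite U
    have e : {v : Fin (l+1) → U // g v ≠ 0} ≃
        Σ x : U, {w : Fin l → U // g.curryLeft x w ≠ 0} := by
      refine Equiv.trans (Equiv.subtypeEquiv (Fin.consEquiv (fun _ : Fin (l+1) => U)).symm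
        (fun v => ?_)) (Equiv.subtypeProdEquivSigmaSubtype
        (fun (x : U) (w : Fin l → U) => g.curryLeft x w ≠ 0))
      rw [AlternatingMap.curryLeft_apply_apply]
      exact not_congr (Iff.of_eq (congrArg (· = 0)
        (congrArg g (Fin.cons_self_tail v).symm)))
    rw [Nat.card_congr e, Nat.card_eq_fintype_card, Fintype.card_sigma]
    have hterm : ∀ x : U, x ∉ K →
        ∏ i ∈ Finset.range l, (Fintype.card F ^ n - Fintype.card F ^ (n - (i+1)))
          ≤ Fintype.card {w : Fin l → U // g.curryLeft x w ≠ 0} := by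
      intro x hx
      have := ih (g.curryLeft x) (by simpa [K, LinearMap.mem_ker] using hx)
        (le_trans (Nat.le_succ l) hl)
      rwa [Nat.card_eq_fintype_card] at this
    -- cardinality of the complement of K
    have hcardK : Fintype.card K ≤ Fintype.card F ^ (n - (l+1)) := by
      rw [card_eq_pow_finrank (K := F) (V := K)]
      refine Nat.pow_le_pow_right (Nat.one_le_iff_ne_zero.2 Fintype.card_ne_zero) ?_
      have hker := finrank_ker_curry_le g hg
      rw [← hK] at hker
      omega
    have hsplit : ∏ i ∈ Finset.range (l+1),
        (Fintype.card F ^ n - Fintype.card F ^ (n - (i+1)))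
        = (∏ i ∈ Finset.range l, (Fintype.card F ^ n - Fintype.card F ^ (n - (i+1))))
          * (Fintype.card F ^ n - Fintype.card F ^ (n - (l+1))) :=
      Finset.prod_range_succ _ l
    have hcardU : Fintype.card U = Fintype.card F ^ n := card_eq_pow_finrank (K := F) (V := U)
    have hfilter : Fintype.card F ^ n - Fintype.card F ^ (n - (l+1))
        ≤ (Finset.univ.filter (fun x : U => x ∉ K)).card := by
      have h1 : (Finset.univ.filter (fun x : U => x ∈ K)).card = Fintype.card K :=
        (Fintype.card_subtype (fun x : U => x ∈ K)).symm
      have h2 := Finset.card_filter_add_card_filter_not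
        (s := (Finset.univ : Finset U)) (p := fun x : U => x ∈ K)
      rw [Finset.card_univ, hcardU] at h2
      omega
    calc ∏ i ∈ Finset.range (l+1), (Fintype.card F ^ n - Fintype.card F ^ (n - (i+1)))
        ≤ (Finset.univ.filter (fun x : U => x ∉ K)).card *
          ∏ i ∈ Finset.range l, (Fintype.card F ^ n - Fintype.card F ^ (n - (i+1))) := by
          rw [hsplit, mul_comm]
          exact Nat.mul_le_mul_right _ hfilter
      _ ≤ ∑ x ∈ Finset.univ.filter (fun x : U => x ∉ K),
            Fintype.card {w : Fin l → U // g.curryLeft x w ≠ 0} := by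
          rw [← smul_eq_mul]
          exact Finset.card_nsmul_le_sum _ _ _
            (fun x hx => hterm x (Finset.mem_filter.1 hx).2)
      _ ≤ ∑ x : U, Fintype.card {w : Fin l → U // g.curryLeft x w ≠ 0} :=
          Finset.sum_le_sum_of_subset (Finset.filter_subset _ _)

private lemma card_tuples_eq [Fintype F] [FiniteDimensional F U] {l : ℕ}
    (P : (Fin l → U) → Prop) (Q : Submodule F U → Prop)
    (h1 : ∀ v, P v → LinearIndependent F v)
    (h2 : ∀ v, P v → Q (Submodule.span F (Set.range v)))
    (h3 : ∀ M, Q M → finrank F M = l)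
    (h4 : ∀ M, Q M → ∀ v : Fin l → U, (∀ i, v i ∈ M) → LinearIndependent F v → P v) :
    Nat.card {v : Fin l → U // P v} =
      Nat.card {M : Submodule F U // Q M} *
        ∏ i ∈ Finset.range l, (Fintype.card F ^ l - Fintype.card F ^ i) := by
  classical
  haveI : Finite U := Module.finite_of_finite F
  haveI : Finite (Submodule F U) :=
    Finite.of_injective (fun M : Submodule F U => (M : Set U)) SetLike.coe_injective
  let Φ : (Σ M : {M : Submodule F U // Q M}, {w : Fin l → M.1 // LinearIndependent F w})
      → {v : Fin l → U // P v} := fun p =>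
    ⟨fun i => (p.2.1 i : U), h4 p.1.1 p.1.2 _ (fun i => (p.2.1 i).2)
      (p.2.2.map' p.1.1.subtype (Submodule.ker_subtype p.1.1))⟩
  have hspan : ∀ (p : Σ M : {M : Submodule F U // Q M},
      {w : Fin l → M.1 // LinearIndependent F w}),
      Submodule.span F (Set.range (fun i => (p.2.1 i : U))) = p.1.1 := by
    rintro ⟨⟨M, hM⟩, ⟨w, hw⟩⟩
    refine Submodule.eq_of_le_of_finrank_eq (Submodule.span_le.2 ?_) ?_
    · rintro x ⟨i, rfl⟩; exact (w i).2
    · show finrank F ↥(Submodule.span F (Set.range (M.subtype ∘ w))) = finrank F ↥M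
      rw [finrank_span_eq_card (hw.map' M.subtype (Submodule.ker_subtype M)),
        Fintype.card_fin, h3 M hM]
  have hbij : Function.Bijective Φ := by
    constructor
    · rintro ⟨⟨M, hM⟩, ⟨w, hw⟩⟩ ⟨⟨M', hM'⟩, ⟨w', hw'⟩⟩ h
      have hval : (fun i => (w i : U)) = fun i => (w' i : U) := congrArg Subtype.val h
      have hMM : M = M' := by
        have e1 := hspan ⟨⟨M, hM⟩, ⟨w, hw⟩⟩
        have e2 := hspan ⟨⟨M', hM'⟩, ⟨w', hw'⟩⟩
        simp only at e1 e2
        rw [← e1, ← e2, hval]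
      subst hMM
      refine congrArg (Sigma.mk (⟨M, hM⟩ : {M : Submodule F U // Q M})) (Subtype.ext (funext fun i => Subtype.ext ?_))
      exact congrFun hval i
    · rintro ⟨v, hv⟩
      exact ⟨⟨⟨Submodule.span F (Set.range v), h2 v hv⟩,
        ⟨fun i => ⟨v i, Submodule.subset_span (Set.mem_range_self i)⟩,
          LinearIndependent.of_comp (Submodule.span F (Set.range v)).subtype
            (h1 v hv)⟩⟩, Subtype.ext rfl⟩
  have hMcard : ∀ M : {M : Submodule F U // Q M},
      Nat.card {w : Fin l → M.1 // LinearIndependent F w}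
      = ∏ i ∈ Finset.range l, (Fintype.card F ^ l - Fintype.card F ^ i) := by
    intro M
    have hk : l ≤ finrank F M.1 := le_of_eq (h3 M.1 M.2).symm
    rw [card_linearIndependent hk, h3 M.1 M.2]
    exact Fin.prod_univ_eq_prod_range
      (fun j => Fintype.card F ^ l - Fintype.card F ^ j) l
  letI : Fintype {M : Submodule F U // Q M} := Fintype.ofFinite _
  letI : ∀ M : {M : Submodule F U // Q M},
      Fintype {w : Fin l → M.1 // LinearIndependent F w} := fun M => Fintype.ofFinite _
  calc Nat.card {v : Fin l → U // P v}
      = Nat.card (Σ M : {M : Submodule F U // Q M},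
          {w : Fin l → M.1 // LinearIndependent F w}) :=
        (Nat.card_congr (Equiv.ofBijective Φ hbij)).symm
    _ = ∑ M : {M : Submodule F U // Q M},
          Fintype.card {w : Fin l → M.1 // LinearIndependent F w} := by
        rw [Nat.card_eq_fintype_card, Fintype.card_sigma]
    _ = ∑ _M : {M : Submodule F U // Q M},
          ∏ i ∈ Finset.range l, (Fintype.card F ^ l - Fintype.card F ^ i) := by
        refine Finset.sum_congr rfl fun M _ => ?_
        rw [← Nat.card_eq_fintype_card, hMcard M]
    _ = Nat.card {M : Submodule F U // Q M} *
          ∏ i ∈ Finset.range l, (Fintype.card F ^ l - Fintype.card F ^ i) := by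
        rw [Finset.sum_const, smul_eq_mul, Finset.card_univ, Nat.card_eq_fintype_card]

private lemma prod_P_eq {q n l : ℕ} (hl : l ≤ n) :
    ∏ i ∈ Finset.range l, (q ^ n - q ^ (n - (i+1)))
      = q ^ (l * (n - l)) * ∏ i ∈ Finset.range l, (q ^ l - q ^ i) := by
  have h1 : ∏ i ∈ Finset.range l, (q ^ l - q ^ i)
      = ∏ i ∈ Finset.range l, (q ^ l - q ^ (l - (i+1))) := by
    rw [← Finset.prod_range_reflect]
    refine Finset.prod_congr rfl fun i hi => ?_
    have h : l - 1 - i = l - (i+1) := by omega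
    rw [h]
  have h2 : q ^ (l * (n - l)) = ∏ _i ∈ Finset.range l, q ^ (n - l) := by
    rw [Finset.prod_const, Finset.card_range, ← pow_mul, Nat.mul_comm]
  rw [h1, h2, ← Finset.prod_mul_distrib]
  refine Finset.prod_congr rfl fun i hi => ?_
  have hi' := Finset.mem_range.1 hi
  have e1 : n - l + l = n := by omega
  have e2 : n - l + (l - (i+1)) = n - (i+1) := by omega
  rw [Nat.mul_sub, ← pow_add, ← pow_add, e1, e2]

private lemma cast_prod_sub (q a : ℕ) (b : ℕ → ℕ) (l : ℕ)
    (hb : ∀ i ∈ Finset.range l, b i ≤ a) (hq : 1 ≤ q) :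
    ((∏ i ∈ Finset.range l, (q ^ a - q ^ b i) : ℕ) : ℚ)
      = ∏ i ∈ Finset.range l, ((q:ℚ) ^ a - (q:ℚ) ^ b i) := by
  rw [Nat.cast_prod]
  refine Finset.prod_congr rfl fun i hi => ?_
  rw [Nat.cast_sub (Nat.pow_le_pow_right hq (hb i hi))]
  push_cast
  ring

private lemma prod_I_eq {q n l : ℕ} (hq : 2 ≤ q) (hl : l ≤ n) :
    (∏ i ∈ Finset.range l, ((q:ℚ) ^ n - (q:ℚ) ^ i))
      = gaussBinom q n l * ∏ i ∈ Finset.range l, ((q:ℚ) ^ l - (q:ℚ) ^ i) := by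
  have hq1 : (1:ℚ) < (q:ℚ) := by exact_mod_cast hq
  have hne : ∀ k : ℕ, 1 ≤ k → ((q:ℚ) ^ k - 1) ≠ 0 := by
    intro k hk
    have h1 : (1:ℚ) < (q:ℚ) ^ k := one_lt_pow₀ hq1 (by omega)
    intro h0
    have : (q:ℚ) ^ k = 1 := by linarith [sub_eq_zero.1 h0]
    linarith
  have hsplit : ∀ (a : ℕ), l ≤ a → ∏ i ∈ Finset.range l, ((q:ℚ)^a - (q:ℚ)^i)
      = (∏ i ∈ Finset.range l, (q:ℚ)^i) *
        ∏ i ∈ Finset.range l, ((q:ℚ)^(a-i) - 1) := by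
    intro a ha
    rw [← Finset.prod_mul_distrib]
    refine Finset.prod_congr rfl fun i hi => ?_
    have hi' := Finset.mem_range.1 hi
    have e : i + (a - i) = a := by omega
    rw [mul_sub, mul_one, ← pow_add, e]
  have hrefl : ∏ i ∈ Finset.range l, ((q:ℚ)^(l-i) - 1)
      = ∏ i ∈ Finset.range l, ((q:ℚ)^(i+1) - 1) := by
    rw [← Finset.prod_range_reflect (fun i => ((q:ℚ)^(i+1) - 1)) l]
    refine Finset.prod_congr rfl fun i hi => ?_
    have hi' := Finset.mem_range.1 hi
    have e : l - 1 - i + 1 = l - i := by omega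
    rw [e]
  have hC : (∏ i ∈ Finset.range l, ((q:ℚ)^(i+1) - 1)) ≠ 0 :=
    Finset.prod_ne_zero_iff.2 fun i _ => hne (i+1) (Nat.le_add_left 1 i)
  rw [hsplit n hl, hsplit l le_rfl, hrefl, gaussBinom, Finset.prod_div_distrib]
  field_simp

end Aux

variable (F : Type*) [Field F] (V : Type*) [AddCommGroup V] [Module F V]

/-- The wedge product `v₁ ∧ ⋯ ∧ vₙ` as an element of the `n`-th exterior power. -/
noncomputable def wedge (n : ℕ) (v : Fin n → V) : ⋀[F]^n V :=
  ⟨ExteriorAlgebra.ιMulti F n v, ExteriorAlgebra.ιMulti_range F n (Set.mem_range_self v)⟩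

/-- The product `w₁ ∧ ⋯ ∧ w_k ∧ x` for `x` in the `l`-th exterior power, landing in the
`n`-th exterior power, where `k + l = n`. -/
noncomputable def mulWedge (k l n : ℕ) (h : k + l = n) (w : Fin k → V) (x : ⋀[F]^l V) :
    ⋀[F]^n V :=
  ⟨ExteriorAlgebra.ιMulti F k w * (x : ExteriorAlgebra F V), by
    subst h
    have hmem : ExteriorAlgebra.ιMulti F k w * (x : ExteriorAlgebra F V) ∈
        (LinearMap.range (ExteriorAlgebra.ι F : V →ₗ[F] ExteriorAlgebra F V)) ^ k *
          (LinearMap.range (ExteriorAlgebra.ι F : V →ₗ[F] ExteriorAlgebra F V)) ^ l :=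
      Submodule.mul_mem_mul (ExteriorAlgebra.ιMulti_range F k (Set.mem_range_self w)) x.2
    rw [← pow_add] at hmem
    exact hmem⟩

/-- An `ℓ`-dimensional subspace `L` of `V` lies on the hyperplane of the Plücker projective
space determined by the nonzero functional `φ : ⋀[F]^ℓ V →ₗ[F] F` if
`φ (ω₁ ∧ ⋯ ∧ ω_ℓ) = 0` for some (equivalently, every) basis `ω₁, …, ω_ℓ` of `L`. -/
def LiesOn (l : ℕ) (φ : ⋀[F]^l V →ₗ[F] F) (L : Submodule F V) : Prop :=
  ∃ ω : Fin l → V, (∀ i, ω i ∈ L) ∧ LinearIndependent F ω ∧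
    Submodule.span F (Set.range ω) = L ∧ φ (wedge F V l ω) = 0

/-- The hyperplane determined by `φ : ⋀[F]^ℓ V →ₗ[F] F` is decomposable if there exist vectors
`w₁, …, w_{m−ℓ} ∈ V` and a nonzero linear functional `ψ : ⋀[F]^m V →ₗ[F] F` such that
`φ x = ψ (w₁ ∧ ⋯ ∧ w_{m−ℓ} ∧ x)` for all `x ∈ ⋀[F]^ℓ V`. -/
def IsDecomposable (m l : ℕ) (h : l ≤ m) (φ : ⋀[F]^l V →ₗ[F] F) : Prop :=
  ∃ (w : Fin (m - l) → V) (ψ : ⋀[F]^m V →ₗ[F] F), ψ ≠ 0 ∧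
    ∀ x : ⋀[F]^l V, φ x = ψ (mulWedge F V (m - l) l m (Nat.sub_add_cancel h) w x)

/-- Let `1 ≤ ℓ ≤ m−1`, let `W` be an `(m−1)`-dimensional subspace of `V`, and let `Π` be a
hyperplane of `P(⋀^ℓ V)` such that not every `ℓ`-dimensional subspace of `W` lies on `Π`.
Then `|{L ∈ G(ℓ,W) : L lies on Π}| ≤ [m−1 ℓ]_q − q^{ℓ(m−1−ℓ)}`. -/
theorem stmt11 (F : Type*) [Field F] [Fintype F] (V : Type*) [AddCommGroup V] [Module F V]
    [FiniteDimensional F V] (q m l : ℕ) (hq : Fintype.card F = q)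
    (hV : finrank F V = m) (hl : 1 ≤ l) (hlm : l ≤ m - 1)
    (W : Submodule F V) (hW : finrank F W = m - 1)
    (φ : ⋀[F]^l V →ₗ[F] F) (hφ : φ ≠ 0)
    (hne : ¬ ∀ L : Submodule F V, finrank F L = l → L ≤ W → LiesOn F V l φ L) :
    (Nat.card {L : Submodule F V | finrank F L = l ∧ L ≤ W ∧ LiesOn F V l φ L} : ℚ) ≤
      gaussBinom q (m - 1) l - (q : ℚ) ^ (l * (m - 1 - l)) := by
  classical
  subst hq
  set n : ℕ := m - 1 with hn
  have hWn : finrank F ↥W = n := hW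
  have hln : l ≤ n := hlm
  have hq2 : 2 ≤ Fintype.card F := Fintype.one_lt_card
  haveI : Finite ↥W := Module.finite_of_finite F
  haveI : Finite (Submodule F ↥W) :=
    Finite.of_injective (fun M : Submodule F ↥W => (M : Set ↥W)) SetLike.coe_injective
  -- the alternating form on W
  let wedgeAlt : V [⋀^Fin l]→ₗ[F] (⋀[F]^l V) :=
    (ExteriorAlgebra.ιMulti F l).codRestrict (⋀[F]^l V)
      (fun v => ExteriorAlgebra.ιMulti_range F l (Set.mem_range_self v))
  let g : (↥W) [⋀^Fin l]→ₗ[F] F :=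
    (φ.compAlternatingMap wedgeAlt).compLinearMap W.subtype
  have hgv : ∀ v : Fin l → ↥W, g v = φ (wedge F V l (fun i => (v i : V))) :=
    fun v => rfl
  -- g is nonzero
  push_neg at hne
  obtain ⟨L₀, hL₀dim, hL₀le, hL₀not⟩ := hne
  have hg : g ≠ 0 := by
    let bb := (finBasis F ↥L₀).reindex (finCongr hL₀dim)
    let v0 : Fin l → V := fun i => (bb i : V)
    have hv0mem : ∀ i, v0 i ∈ L₀ := fun i => (bb i).2
    have hv0ind : LinearIndependent F v0 :=
      (bb.linearIndependent).map' L₀.subtype (Submodule.ker_subtype L₀)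
    have hv0span : Submodule.span F (Set.range v0) = L₀ := by
      have h : Set.range v0 = L₀.subtype '' Set.range bb := by
        rw [← Set.range_comp]; rfl
      rw [h, Submodule.span_image, Basis.span_eq, Submodule.map_subtype_top]
    have hφv0 : φ (wedge F V l v0) ≠ 0 := by
      intro h0
      exact hL₀not ⟨v0, hv0mem, hv0ind, hv0span, h0⟩
    intro h0
    apply hφv0
    have h1 : g (fun i => (⟨v0 i, hL₀le (hv0mem i)⟩ : ↥W)) = 0 := by rw [h0]; rfl
    rw [hgv] at h1
    exact h1
  -- predicates
  let Q2 : Submodule F ↥W → Prop := fun M =>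
    ∀ w : Fin l → ↥W, (∀ i, w i ∈ M) → LinearIndependent F w → g w ≠ 0
  -- counting identities
  have hcard1 : Nat.card {v : Fin l → ↥W // g v ≠ 0}
      = Nat.card {M : Submodule F ↥W // finrank F ↥M = l ∧ Q2 M} *
        ∏ i ∈ Finset.range l, (Fintype.card F ^ l - Fintype.card F ^ i) := by
    refine card_tuples_eq (fun v => g v ≠ 0) (fun M => finrank F ↥M = l ∧ Q2 M)
      ?_ ?_ (fun M hM => hM.1) (fun M hM v hmem hind => hM.2 v hmem hind)
    · intro v hv
      by_contra h
      exact hv (g.map_linearDependent v h)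
    · intro v hv
      have hvind : LinearIndependent F v := by
        by_contra h; exact hv (g.map_linearDependent v h)
      refine ⟨by rw [finrank_span_eq_card hvind, Fintype.card_fin], ?_⟩
      intro w hwmem hwind h0
      apply hv
      refine zero_on_span g hwind h0 v (fun i => ?_)
      have hsp : Submodule.span F (Set.range w) = Submodule.span F (Set.range v) := by
        refine Submodule.eq_of_le_of_finrank_eq (Submodule.span_le.2 ?_) ?_
        · rintro x ⟨i, rfl⟩; exact hwmem i
        · rw [finrank_span_eq_card hwind, finrank_span_eq_card hvind]
      rw [hsp]
      exact Submodule.subset_span (Set.mem_range_self i)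
  have hcard2 : Nat.card {v : Fin l → ↥W // LinearIndependent F v}
      = Nat.card {M : Submodule F ↥W // finrank F ↥M = l} *
        ∏ i ∈ Finset.range l, (Fintype.card F ^ l - Fintype.card F ^ i) := by
    refine card_tuples_eq (fun v => LinearIndependent F v) (fun M => finrank F ↥M = l)
      (fun v hv => hv) ?_ (fun M hM => hM) (fun M hM v hmem hind => hind)
    intro v hv
    rw [finrank_span_eq_card hv, Fintype.card_fin]
  have hcardI : Nat.card {v : Fin l → ↥W // LinearIndependent F v}
      = ∏ i ∈ Finset.range l, (Fintype.card F ^ n - Fintype.card F ^ i) := by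
    rw [card_linearIndependent (by rw [hWn]; exact hln)]
    rw [hWn]
    exact Fin.prod_univ_eq_prod_range
      (fun j => Fintype.card F ^ n - Fintype.card F ^ j) l
  have hcard3 : ∏ i ∈ Finset.range l,
        (Fintype.card F ^ n - Fintype.card F ^ (n - (i+1)))
      ≤ Nat.card {v : Fin l → ↥W // g v ≠ 0} := by
    have := count_nonzero_tuples l g hg (by rw [hWn]; exact hln)
    rwa [hWn] at this
  -- partition of the Grassmannian of W
  have hpart : Nat.card {M : Submodule F ↥W // finrank F ↥M = l}
      = Nat.card {M : Submodule F ↥W // finrank F ↥M = l ∧ Q2 M}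
        + Nat.card {M : Submodule F ↥W // finrank F ↥M = l ∧ ¬ Q2 M} := by
    letI : Fintype (Submodule F ↥W) := Fintype.ofFinite _
    rw [Nat.card_eq_fintype_card, Nat.card_eq_fintype_card, Nat.card_eq_fintype_card,
      Fintype.card_subtype, Fintype.card_subtype, Fintype.card_subtype,
      ← Finset.filter_filter, ← Finset.filter_filter]
    exact (Finset.card_filter_add_card_filter_not (p := Q2)).symm
  -- injection of the lies-on set
  have hinj : Nat.card {L : Submodule F V | finrank F ↥L = l ∧ L ≤ W ∧ LiesOn F V l φ L}
      ≤ Nat.card {M : Submodule F ↥W // finrank F ↥M = l ∧ ¬ Q2 M} := by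
    have key : ∀ L : Submodule F V, finrank F ↥L = l → L ≤ W → LiesOn F V l φ L →
        finrank F ↥(Submodule.comap W.subtype L) = l ∧
          ¬ Q2 (Submodule.comap W.subtype L) := by
      intro L hdim hle hlies
      have hmap : Submodule.map W.subtype (Submodule.comap W.subtype L) = L := by
        rw [Submodule.map_comap_subtype, inf_eq_right.2 hle]
      have hfr := Submodule.finrank_map_subtype_eq W (Submodule.comap W.subtype L)
      rw [hmap] at hfr
      refine ⟨by rw [← hfr]; exact hdim, ?_⟩
      obtain ⟨ω, hmem, hind, hspan, hzero⟩ := hlies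
      intro hQ2
      refine hQ2 (fun i => (⟨ω i, hle (hmem i)⟩ : ↥W)) (fun i => hmem i)
        (LinearIndependent.of_comp W.subtype hind) ?_
      rw [hgv]
      exact hzero
    refine Nat.card_le_card_of_injective
      (fun L => ⟨Submodule.comap W.subtype L.1, key L.1 L.2.1 L.2.2.1 L.2.2.2⟩) ?_
    rintro ⟨L1, h1⟩ ⟨L2, h2⟩ h
    have hc : Submodule.comap W.subtype L1 = Submodule.comap W.subtype L2 :=
      congrArg Subtype.val h
    have hm1 : Submodule.map W.subtype (Submodule.comap W.subtype L1) = L1 := by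
      rw [Submodule.map_comap_subtype, inf_eq_right.2 h1.2.1]
    have hm2 : Submodule.map W.subtype (Submodule.comap W.subtype L2) = L2 := by
      rw [Submodule.map_comap_subtype, inf_eq_right.2 h2.2.1]
    have hmm := congrArg (Submodule.map W.subtype) hc
    rw [hm1, hm2] at hmm
    exact Subtype.ext hmm
  -- arithmetic conclusion
  set qc := Fintype.card F with hqc
  set B := ∏ i ∈ Finset.range l, (qc ^ l - qc ^ i) with hB
  have hBpos : 0 < B := by
    refine Finset.prod_pos fun i hi => ?_
    exact Nat.sub_pos_of_lt (Nat.pow_lt_pow_right (by omega) (Finset.mem_range.1 hi))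
  have hBcast : ((B : ℕ) : ℚ) = ∏ i ∈ Finset.range l, ((qc:ℚ)^l - (qc:ℚ)^i) := by
    rw [hB]
    exact cast_prod_sub qc l (fun i => i) l
      (fun i hi => (Finset.mem_range.1 hi).le) (by omega)
  have hBQ : (∏ i ∈ Finset.range l, ((qc:ℚ)^l - (qc:ℚ)^i)) ≠ 0 := by
    rw [← hBcast]
    exact Nat.cast_ne_zero.2 hBpos.ne'
  have hIcast : ((∏ i ∈ Finset.range l, (qc ^ n - qc ^ i) : ℕ) : ℚ)
      = ∏ i ∈ Finset.range l, ((qc:ℚ)^n - (qc:ℚ)^i) :=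
    cast_prod_sub qc n (fun i => i) l
      (fun i hi => le_trans (Finset.mem_range.1 hi).le hln) (by omega)
  have hQge : qc ^ (l * (n - l)) * B ≤
      Nat.card {M : Submodule F ↥W // finrank F ↥M = l ∧ Q2 M} * B := by
    rw [hB, ← prod_P_eq hln, ← hcard1]
    exact hcard3
  have hQge' : qc ^ (l * (n - l)) ≤
      Nat.card {M : Submodule F ↥W // finrank F ↥M = l ∧ Q2 M} :=
    Nat.le_of_mul_le_mul_right hQge hBpos
  have hAll : ((Nat.card {M : Submodule F ↥W // finrank F ↥M = l} : ℕ) : ℚ)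
      = gaussBinom qc n l := by
    have h1 : ((Nat.card {M : Submodule F ↥W // finrank F ↥M = l} : ℕ) : ℚ)
        * ∏ i ∈ Finset.range l, ((qc:ℚ)^l - (qc:ℚ)^i)
        = gaussBinom qc n l * ∏ i ∈ Finset.range l, ((qc:ℚ)^l - (qc:ℚ)^i) := by
      rw [← prod_I_eq hq2 hln, ← hIcast, ← hBcast, ← Nat.cast_mul, ← hcard2, hcardI]
    exact mul_right_cancel₀ hBQ h1
  have hfin : ((Nat.card {L : Submodule F V | finrank F ↥L = l ∧ L ≤ W ∧ LiesOn F V l φ L} : ℕ) : ℚ)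
      ≤ ((Nat.card {M : Submodule F ↥W // finrank F ↥M = l ∧ ¬ Q2 M} : ℕ) : ℚ) :=
    Nat.cast_le.2 hinj
  have hpartQ : ((Nat.card {M : Submodule F ↥W // finrank F ↥M = l} : ℕ) : ℚ)
      = ((Nat.card {M : Submodule F ↥W // finrank F ↥M = l ∧ Q2 M} : ℕ) : ℚ)
        + ((Nat.card {M : Submodule F ↥W // finrank F ↥M = l ∧ ¬ Q2 M} : ℕ) : ℚ) := by
    exact_mod_cast congrArg (Nat.cast : ℕ → ℚ) hpart
  have hQQ : ((qc:ℚ)) ^ (l*(n-l)) ≤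
      ((Nat.card {M : Submodule F ↥W // finrank F ↥M = l ∧ Q2 M} : ℕ) : ℚ) := by
    exact_mod_cast hQge'
  rw [hAll] at hpartQ
  calc ((Nat.card {L : Submodule F V | finrank F ↥L = l ∧ L ≤ W ∧ LiesOn F V l φ L} : ℕ) : ℚ)
      ≤ ((Nat.card {M : Submodule F ↥W // finrank F ↥M = l ∧ ¬ Q2 M} : ℕ) : ℚ) := hfin
    _ ≤ gaussBinom qc n l - (qc:ℚ) ^ (l * (n - l)) := by linarith
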